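/- In any profile whose antisymmetric margin function on {a,b,c,d} satisfies 0 < m(d,a) < m(d,c) < m(b,d) < m(c,b) < m(b,a) < m(a,c) (ordinal margin graph M_2), the defensible set is exactly {b, d}; note d is a Condorcet loser is false here — rather d beats a and c — and b is not a Condorcet winner. -/
import Mathlib


inductive Alt : Type
  | a | b | c | d
deriving DecidableEq

open Alt

/-- For any antisymmetric margin function realizing M_2, the
defensible set is exactly {b, d}; moreover d is not a Condorcet loser (d beats
a and c) and b is not a Condorcet winner. -/
theorem defensible_M2 (m : Alt → Alt → ℤ) (hanti : ∀ x y, m x y = - m y x)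
    (h1 : 0 < m d a) (h2 : m d a < m d c) (h3 : m d c < m b d)
    (h4 : m b d < m c b) (h5 : m c b < m b a) (h6 : m b a < m a c) :
    {x : Alt | ∀ y : Alt, ∃ z : Alt, m y x ≤ m z y} = {b, d} ∧
      ¬ (∀ y : Alt, y ≠ d → 0 < m y d) ∧ (0 < m d a ∧ 0 < m d c) ∧
      ¬ (∀ y : Alt, y ≠ b → 0 < m b y) := by
  have h0 : ∀ x, m x x = 0 := fun x => by have := hanti x x; linarith
  have hab := hanti a b
  have hac := hanti a c
  have had := hanti a d
  have hbc := hanti b c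
  have hbd := hanti b d
  have hcd := hanti c d
  refine ⟨?_, ?_, ⟨h1, lt_trans h1 h2⟩, ?_⟩
  · ext x
    simp only [Set.mem_setOf_eq, Set.mem_insert_iff, Set.mem_singleton_iff]
    cases x with
    | a =>
      constructor
      · intro h
        obtain ⟨z, hz⟩ := h b
        exfalso
        cases z <;> linarith [h0 a, h0 b, h0 c, h0 d]
      · rintro (h | h) <;> exact Alt.noConfusion h
    | b =>
      constructor
      · intro _; left; rfl
      · intro _ y
        cases y with
        | a => exact ⟨b, by linarith⟩
        | b => exact ⟨b, le_refl _⟩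
        | c => exact ⟨a, by linarith⟩
        | d => exact ⟨b, by linarith⟩
    | c =>
      constructor
      · intro h
        obtain ⟨z, hz⟩ := h a
        exfalso
        cases z <;> linarith [h0 a, h0 b, h0 c, h0 d]
      · rintro (h | h) <;> exact Alt.noConfusion h
    | d =>
      constructor
      · intro _; right; rfl
      · intro _ y
        cases y with
        | a => exact ⟨d, by linarith⟩
        | b => exact ⟨c, by linarith⟩
        | c => exact ⟨d, by linarith⟩
        | d => exact ⟨d, le_refl _⟩
  · intro h
    have := h a (by intro hh; exact Alt.noConfusion hh)
    linarith
  · intro h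
    have := h c (by intro hh; exact Alt.noConfusion hh)
    linarith
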